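/- Let K be an algebraically closed field of characteristic 2 and let B⁰ = x₁³x₂ + x₂³x₃ + x₃³x₁ be the Klein quartic. Then the common zero locus in ℙ²(K) of the three partial derivatives B⁰₁ = x₁²x₂ + x₃³, B⁰₂ = x₂²x₃ + x₁³, B⁰₃ = x₃²x₁ + x₂³ consists of exactly the 7 points [1 : ε : ε⁵] where ε ranges over the 7th roots of unity in K. -/

import Mathlib

open MvPolynomial

/-- the common zero locus in ℙ² of the partial derivatives of the Klein quartic
`B⁰ = x₁³x₂ + x₂³x₃ + x₃³x₁` in characteristic 2 consists exactly of the 7 points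
`[1 : ε : ε⁵]` with `ε⁷ = 1`. -/
theorem stmt_2 (K : Type*) [Field K] [IsAlgClosed K] [CharP K 2]
    (B : MvPolynomial (Fin 3) K)
    (hB : B = X 0 ^ 3 * X 1 + X 1 ^ 3 * X 2 + X 2 ^ 3 * X 0) :
    (∀ v : Fin 3 → K, v ≠ 0 →
      ((∀ i, eval v (pderiv i B) = 0) ↔
        ∃ ε c : K, c ≠ 0 ∧ ε ^ 7 = 1 ∧ v = c • ![1, ε, ε ^ 5])) ∧
    {p : Projectivization K (Fin 3 → K) | ∀ i, eval p.rep (pderiv i B) = 0}.ncard = 7 := by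
  have h2 : (2 : K) = 0 := CharTwo.two_eq_zero
  have h3 : (3 : K) = 1 := by linear_combination h2
  have e0 : ∀ v : Fin 3 → K, eval v (pderiv 0 B) = v 0 ^ 2 * v 1 + v 2 ^ 3 := by
    intro v; simp [hB, pderiv_X, Pi.single_apply]; ring_nf; rw [h3]; ring
  have e1 : ∀ v : Fin 3 → K, eval v (pderiv 1 B) = v 0 ^ 3 + v 1 ^ 2 * v 2 := by
    intro v; simp [hB, pderiv_X, Pi.single_apply]; ring_nf; rw [h3]; ring
  have e2 : ∀ v : Fin 3 → K, eval v (pderiv 2 B) = v 1 ^ 3 + v 2 ^ 2 * v 0 := by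
    intro v; simp [hB, pderiv_X, Pi.single_apply]; ring_nf; rw [h3]; ring
  have key : ∀ v : Fin 3 → K, v ≠ 0 →
      ((∀ i, eval v (pderiv i B) = 0) ↔
        ∃ ε c : K, c ≠ 0 ∧ ε ^ 7 = 1 ∧ v = c • ![1, ε, ε ^ 5]) := by
    intro v hv
    constructor
    · intro h
      have h0 := h 0; rw [e0] at h0
      have h1 := h 1; rw [e1] at h1
      have h2' := h 2; rw [e2] at h2'
      have hA : v 2 ^ 3 = v 0 ^ 2 * v 1 := by
        linear_combination h0 - v 0 ^ 2 * v 1 * h2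
      have hBv : v 1 ^ 2 * v 2 = v 0 ^ 3 := by
        linear_combination h1 - v 0 ^ 3 * h2
      have hv0 : v 0 ≠ 0 := by
        intro z
        have hv2 : v 2 = 0 := by
          have : v 2 ^ 3 = 0 := by rw [hA, z]; ring
          exact pow_eq_zero_iff (by norm_num) |>.mp this
        have hv1 : v 1 = 0 := by
          have h3' : v 1 ^ 3 = 0 := by rw [z, hv2] at h2'; simpa using h2'
          exact pow_eq_zero_iff (by norm_num) |>.mp h3'
        apply hv
        funext i
        fin_cases i <;> simp [z, hv1, hv2]
      have hv1 : v 1 ≠ 0 := by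
        intro z
        apply hv0
        have : v 0 ^ 3 = 0 := by rw [← hBv, z]; ring
        exact pow_eq_zero_iff (by norm_num) |>.mp this
      have h7 : v 1 ^ 7 * v 0 ^ 2 = v 0 ^ 7 * v 0 ^ 2 := by
        linear_combination (v 1 ^ 4 * v 2 ^ 2 + v 0 ^ 3 * v 1 ^ 2 * v 2 + v 0 ^ 6) * hBv - v 1 ^ 6 * hA
      have h7' : v 1 ^ 7 = v 0 ^ 7 := mul_right_cancel₀ (pow_ne_zero 2 hv0) h7
      refine ⟨v 1 / v 0, v 0, hv0, ?_, ?_⟩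
      · field_simp
        exact h7'
      · funext i
        fin_cases i
        · simp
        · simp [Pi.smul_apply, smul_eq_mul]
          field_simp
        · show v 2 = v 0 * (v 1 / v 0) ^ 5
          field_simp
          have hx : v 2 * v 0 ^ 4 * v 1 ^ 2 = v 1 ^ 5 * v 1 ^ 2 := by
            linear_combination v 0 ^ 4 * hBv - h7'
          have hy := mul_right_cancel₀ (pow_ne_zero 2 hv1) hx
          linear_combination hy
    · rintro ⟨ε, c, hc, hε, rfl⟩
      have g0 : eval (c • ![1, ε, ε ^ 5]) (pderiv (0 : Fin 3) B) = 0 := by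
        rw [e0]
        simp only [Pi.smul_apply, Matrix.cons_val_zero, Matrix.cons_val_one, Matrix.head_cons,
          smul_eq_mul, Matrix.cons_val_two, Matrix.tail_cons]
        linear_combination c ^ 3 * ε * (ε ^ 7 + 1) * hε + c ^ 3 * ε * h2
      have g1 : eval (c • ![1, ε, ε ^ 5]) (pderiv (1 : Fin 3) B) = 0 := by
        rw [e1]
        simp only [Pi.smul_apply, Matrix.cons_val_zero, Matrix.cons_val_one, Matrix.head_cons,
          smul_eq_mul, Matrix.cons_val_two, Matrix.tail_cons]
        linear_combination c ^ 3 * hε + c ^ 3 * h2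
      have g2 : eval (c • ![1, ε, ε ^ 5]) (pderiv (2 : Fin 3) B) = 0 := by
        rw [e2]
        simp only [Pi.smul_apply, Matrix.cons_val_zero, Matrix.cons_val_one, Matrix.head_cons,
          smul_eq_mul, Matrix.cons_val_two, Matrix.tail_cons]
        linear_combination c ^ 3 * ε ^ 3 * hε + c ^ 3 * ε ^ 3 * h2
      intro i
      fin_cases i <;> assumption
  refine ⟨key, ?_⟩
  have h7K : (7 : K) ≠ 0 := by
    intro h
    have h1 : (1 : K) = 0 := by linear_combination h - 3 * h2
    exact one_ne_zero h1
  haveI : NeZero ((7 : ℕ) : K) := ⟨by push_cast; exact h7K⟩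
  obtain ⟨ζ, hζ⟩ := HasEnoughRootsOfUnity.exists_primitiveRoot K 7
  have hmem : ∀ x : K, x ∈ Polynomial.nthRootsFinset 7 (1 : K) ↔ x ^ 7 = 1 := fun x =>
    Polynomial.mem_nthRootsFinset (by norm_num) 1
  have hcard : (Polynomial.nthRootsFinset 7 (1 : K)).card = 7 := hζ.card_nthRootsFinset
  have hne : ∀ ε : K, (![1, ε, ε ^ 5] : Fin 3 → K) ≠ 0 := by
    intro ε h
    have := congrFun h 0
    simp at this
  set g : K → Projectivization K (Fin 3 → K) :=
    fun ε => Projectivization.mk K ![1, ε, ε ^ 5] (hne ε) with hg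
  have hset : {p : Projectivization K (Fin 3 → K) | ∀ i, eval p.rep (pderiv i B) = 0}
      = g '' ↑(Polynomial.nthRootsFinset 7 (1 : K)) := by
    ext p
    simp only [Set.mem_setOf_eq, Set.mem_image, Finset.mem_coe]
    constructor
    · intro hp
      obtain ⟨ε, c, hc, hε, hr⟩ := (key p.rep p.rep_nonzero).mp hp
      refine ⟨ε, (hmem ε).mpr hε, ?_⟩
      rw [hg]
      rw [← Projectivization.mk_rep p]
      exact ((Projectivization.mk_eq_mk_iff' K _ _ p.rep_nonzero (hne ε)).mpr ⟨c, hr.symm⟩).symm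
    · rintro ⟨ε, hε, rfl⟩
      have hε' : ε ^ 7 = 1 := (hmem ε).mp hε
      have hmk : Projectivization.mk K (g ε).rep (g ε).rep_nonzero
          = Projectivization.mk K ![1, ε, ε ^ 5] (hne ε) := by
        rw [Projectivization.mk_rep]
      obtain ⟨a, ha⟩ := (Projectivization.mk_eq_mk_iff K _ _ _ _).mp hmk
      apply (key (g ε).rep (g ε).rep_nonzero).mpr
      exact ⟨ε, (a : K), a.ne_zero, hε', by rw [← ha, Units.smul_def]⟩
  rw [hset]
  rw [Set.ncard_image_of_injOn, Set.ncard_coe_finset, hcard]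
  intro x hx y hy hxy
  rw [hg] at hxy
  obtain ⟨a, ha⟩ := (Projectivization.mk_eq_mk_iff' K _ _ (hne x) (hne y)).mp hxy
  have h0 := congrFun ha 0
  have h1 := congrFun ha 1
  simp only [Pi.smul_apply, Matrix.cons_val_zero, Matrix.cons_val_one, Matrix.head_cons,
    smul_eq_mul, mul_one] at h0 h1
  rw [h0, one_mul] at h1
  exact h1.symm
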